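/- For any Borel probability measure P on ℝ and every y ∈ ℝ, ∫ 1{x·y ≤ 0} φ(y − x) dP(x) ≤ (1 − ρ₁) φ(y). Equivalently, whenever m(y) > 0, the posterior probability P(XY ≤ 0 | Y = y) is at most the complementary local activity rate clar(y) = (1 − ρ₁)φ(y)/m(y). -/
import Mathlib


open MeasureTheory Real

/-- The standard normal density. -/
noncomputable def phi (t : ℝ) : ℝ := (Real.sqrt (2 * Real.pi))⁻¹ * Real.exp (-(t ^ 2) / 2)

/-- The marginal density of `Y` in the signal-plus-noise model. -/
noncomputable def marginal (P : Measure ℝ) (y : ℝ) : ℝ := ∫ x, phi (y - x) ∂P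

/-- The sparsity rate `ρ₁ = ∫ (1 - e^{-x²/2}) dP(x)`. -/
noncomputable def sparsityRate (P : Measure ℝ) : ℝ := ∫ x, (1 - Real.exp (-(x ^ 2) / 2)) ∂P

lemma phi_nonneg (t : ℝ) : 0 ≤ phi t := by
  unfold phi
  positivity

lemma phi_pointwise {x y : ℝ} (h : x * y ≤ 0) :
    phi (y - x) ≤ phi y * Real.exp (-(x ^ 2) / 2) := by
  unfold phi
  rw [mul_assoc, ← Real.exp_add]
  gcongr
  nlinarith [sq_nonneg (y - x)]

lemma integrable_g (P : Measure ℝ) [IsProbabilityMeasure P] :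
    Integrable (fun x : ℝ => Real.exp (-(x ^ 2) / 2)) P := by
  refine (integrable_const (1 : ℝ)).mono' ?_ ?_
  · exact (Real.continuous_exp.comp (by continuity)).aestronglyMeasurable
  · filter_upwards with x
    rw [Real.norm_eq_abs, abs_of_pos (Real.exp_pos _)]
    exact Real.exp_le_one_iff.mpr (by nlinarith [sq_nonneg x])

lemma integrable_phi (P : Measure ℝ) [IsProbabilityMeasure P] (y : ℝ) :
    Integrable (fun x : ℝ => phi (y - x)) P := by
  refine (integrable_const ((Real.sqrt (2 * Real.pi))⁻¹ : ℝ)).mono' ?_ ?_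
  · unfold phi
    exact (by fun_prop : Continuous fun x : ℝ => (Real.sqrt (2 * Real.pi))⁻¹ *
      Real.exp (-((y - x) ^ 2) / 2)).aestronglyMeasurable
  · filter_upwards with x
    rw [Real.norm_eq_abs, abs_of_nonneg (phi_nonneg _)]
    unfold phi
    have h1 : Real.exp (-((y - x) ^ 2) / 2) ≤ 1 :=
      Real.exp_le_one_iff.mpr (by nlinarith [sq_nonneg (y - x)])
    have h2 : (0:ℝ) < (Real.sqrt (2 * Real.pi))⁻¹ := by positivity
    nlinarith

lemma one_sub_sparsity (P : Measure ℝ) [IsProbabilityMeasure P] :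
    1 - sparsityRate P = ∫ x, Real.exp (-(x ^ 2) / 2) ∂P := by
  unfold sparsityRate
  rw [integral_sub (integrable_const 1) (integrable_g P), integral_const]
  simp

/-- for any Borel probability measure `P` and every `y`,
`∫_{ {x : x y ≤ 0} } φ(y - x) dP(x) ≤ (1 - ρ₁) φ(y)`; equivalently, whenever `m(y) > 0`,
the posterior probability `P(XY ≤ 0 | Y = y)` is at most `clar(y) = (1 - ρ₁)φ(y)/m(y)`. -/
theorem stmt8 (P : Measure ℝ) [IsProbabilityMeasure P] :
    (∀ y : ℝ, (∫ x in {x : ℝ | x * y ≤ 0}, phi (y - x) ∂P) ≤ (1 - sparsityRate P) * phi y) ∧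
    (∀ y : ℝ, 0 < marginal P y →
      (∫ x in {x : ℝ | x * y ≤ 0}, phi (y - x) ∂P) / marginal P y ≤
        (1 - sparsityRate P) * phi y / marginal P y) := by
  have main : ∀ y : ℝ, (∫ x in {x : ℝ | x * y ≤ 0}, phi (y - x) ∂P) ≤
      (1 - sparsityRate P) * phi y := by
    intro y
    have hSmeas : MeasurableSet {x : ℝ | x * y ≤ 0} :=
      measurableSet_le (by fun_prop) measurable_const
    have h1 : (∫ x in {x : ℝ | x * y ≤ 0}, phi (y - x) ∂P) ≤
        ∫ x in {x : ℝ | x * y ≤ 0}, phi y * Real.exp (-(x ^ 2) / 2) ∂P := by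
      refine setIntegral_mono_on ((integrable_phi P y).integrableOn)
        (((integrable_g P).const_mul (phi y)).integrableOn) hSmeas ?_
      intro x hx
      exact phi_pointwise hx
    have h2 : (∫ x in {x : ℝ | x * y ≤ 0}, phi y * Real.exp (-(x ^ 2) / 2) ∂P) =
        phi y * ∫ x in {x : ℝ | x * y ≤ 0}, Real.exp (-(x ^ 2) / 2) ∂P :=
      integral_const_mul _ _
    have h3 : (∫ x in {x : ℝ | x * y ≤ 0}, Real.exp (-(x ^ 2) / 2) ∂P) ≤
        ∫ x, Real.exp (-(x ^ 2) / 2) ∂P :=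
      setIntegral_le_integral (integrable_g P)
        (Filter.Eventually.of_forall fun x => (Real.exp_pos _).le)
    calc (∫ x in {x : ℝ | x * y ≤ 0}, phi (y - x) ∂P)
        ≤ phi y * ∫ x in {x : ℝ | x * y ≤ 0}, Real.exp (-(x ^ 2) / 2) ∂P := by
          rw [← h2]; exact h1
      _ ≤ phi y * ∫ x, Real.exp (-(x ^ 2) / 2) ∂P := by
          exact mul_le_mul_of_nonneg_left h3 (phi_nonneg y)
      _ = (1 - sparsityRate P) * phi y := by rw [one_sub_sparsity]; ring
  refine ⟨main, fun y hm => ?_⟩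
  exact (div_le_div_iff_of_pos_right hm).mpr (main y)
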